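/- arXiv:1808.10013 — 8 statements merged into one kernel-verified Lean document; each statement's English description precedes it below -/
import Mathlib

section
/- For p, q ∈ (0,1), the KL divergence between Bernoulli(p) and Bernoulli(q) satisfies KL(Bernoulli(p), Bernoulli(q)) ≤ (p - q)^2 / (2 · min{p(1-p), q(1-q)}). -/
lemma var_min_le {a b x : ℝ} (hax : a ≤ x) (hxb : x ≤ b) :
    min (a * (1 - a)) (b * (1 - b)) ≤ x * (1 - x) := by
  rcases le_total (x + a) 1 with h | h
  · exact le_trans (min_le_left _ _) (by nlinarith [mul_nonneg (sub_nonneg.2 hax) (by linarith : (0:ℝ) ≤ 1 - a - x)])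
  · exact le_trans (min_le_right _ _) (by nlinarith [mul_nonneg (sub_nonneg.2 hxb) (by linarith : (0:ℝ) ≤ x + b - 1)])

/-- For p, q ∈ (0,1), the KL divergence between Bernoulli(p) and Bernoulli(q)
satisfies KL(Bern(p), Bern(q)) ≤ (p - q)² / (2 min{p(1-p), q(1-q)}). -/
theorem bernoulli_kl_upper_bound (p q : ℝ)
    (hp : p ∈ Set.Ioo (0 : ℝ) 1) (hq : q ∈ Set.Ioo (0 : ℝ) 1) :
    p * Real.log (p / q) + (1 - p) * Real.log ((1 - p) / (1 - q)) ≤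
      (p - q) ^ 2 / (2 * min (p * (1 - p)) (q * (1 - q))) := by
  obtain ⟨hp0, hp1⟩ := hp
  obtain ⟨hq0, hq1⟩ := hq
  set m := min (p * (1 - p)) (q * (1 - q)) with hm
  have hm0 : 0 < m := lt_min (by nlinarith) (by nlinarith)
  set f : ℝ → ℝ := fun x => (x - p) ^ 2 / (2 * m) + p * Real.log x + (1 - p) * Real.log (1 - x)
    with hf
  have hder : ∀ x, 0 < x → x < 1 →
      HasDerivAt f ((x - p) * (x * (1 - x) - m) / (m * (x * (1 - x)))) x := by
    intro x hx0 hx1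
    have hx1' : (1 : ℝ) - x ≠ 0 := by linarith
    have h1 : HasDerivAt (fun x : ℝ => (x - p) ^ 2 / (2 * m)) ((x - p) / m) x := by
      have := (((hasDerivAt_id x).sub_const p).pow 2).div_const (2 * m)
      refine this.congr_deriv ?_
      simp only [id]
      field_simp
      ring
    have h2 : HasDerivAt (fun x : ℝ => p * Real.log x) (p * x⁻¹) x :=
      (Real.hasDerivAt_log hx0.ne').const_mul p
    have h3 : HasDerivAt (fun x : ℝ => (1 - p) * Real.log (1 - x)) ((1 - p) * (-(1 - x)⁻¹)) x := by
      have h0 : HasDerivAt (fun x : ℝ => 1 - x) (-1) x := (hasDerivAt_id x).const_sub 1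
      have hln := (Real.hasDerivAt_log hx1').comp x h0
      have : HasDerivAt (fun x : ℝ => Real.log (1 - x)) (-(1 - x)⁻¹) x := by
        refine hln.congr_deriv ?_; ring
      exact this.const_mul (1 - p)
    have := (h1.add h2).add h3
    refine this.congr_deriv ?_
    field_simp
    ring
  have key : f p ≤ f q := by
    rcases le_total p q with hpq | hpq
    · have := monotoneOn_of_deriv_nonneg (convex_Icc p q)
        (fun x hx => by
          exact ((hder x (by exact lt_of_lt_of_le hp0 hx.1) (lt_of_le_of_lt hx.2 hq1)).continuousAt).continuousWithinAt)
        (fun x hx => by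
          rw [interior_Icc] at hx
          exact ((hder x (lt_trans hp0 hx.1) (lt_trans hx.2 hq1)).differentiableAt).differentiableWithinAt)
        (fun x hx => by
          rw [interior_Icc] at hx
          obtain ⟨hx1, hx2⟩ := hx
          rw [(hder x (lt_trans hp0 hx1) (lt_trans hx2 hq1)).deriv]
          apply div_nonneg
          · apply mul_nonneg (by linarith)
            have := var_min_le (a := p) (b := q) hx1.le hx2.le
            linarith
          · have : 0 < x * (1 - x) := by nlinarith
            positivity)
      exact this (Set.left_mem_Icc.2 hpq) (Set.right_mem_Icc.2 hpq) hpq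
    · have := antitoneOn_of_deriv_nonpos (convex_Icc q p)
        (fun x hx => by
          exact ((hder x (lt_of_lt_of_le hq0 hx.1) (lt_of_le_of_lt hx.2 hp1)).continuousAt).continuousWithinAt)
        (fun x hx => by
          rw [interior_Icc] at hx
          exact ((hder x (lt_trans hq0 hx.1) (lt_trans hx.2 hp1)).differentiableAt).differentiableWithinAt)
        (fun x hx => by
          rw [interior_Icc] at hx
          obtain ⟨hx1, hx2⟩ := hx
          rw [(hder x (lt_trans hq0 hx1) (lt_trans hx2 hp1)).deriv]
          have hnum : (x - p) * (x * (1 - x) - m) ≤ 0 := by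
            apply mul_nonpos_of_nonpos_of_nonneg (by linarith)
            have := var_min_le (a := q) (b := p) hx1.le hx2.le
            rw [min_comm] at this
            linarith
          have hden : 0 < m * (x * (1 - x)) := by
            have : 0 < x * (1 - x) := by nlinarith
            positivity
          exact div_nonpos_of_nonpos_of_nonneg hnum hden.le)
      exact this (Set.left_mem_Icc.2 hpq) (Set.right_mem_Icc.2 hpq) hpq
  have hfp : f p = p * Real.log p + (1 - p) * Real.log (1 - p) := by
    simp [hf]
  have hfq : f q = (q - p) ^ 2 / (2 * m) + p * Real.log q + (1 - p) * Real.log (1 - q) := by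
    simp [hf]
  rw [Real.log_div hp0.ne' hq0.ne', Real.log_div (by linarith) (by linarith)]
  rw [hfp, hfq] at key
  have heq : (q - p) ^ 2 / (2 * m) = (p - q) ^ 2 / (2 * m) := by ring
  linarith
end

section
/- Let Φ: 𝒳 → 𝒳' be any measurable map, and define f_Φ(X) := E[Y | Φ(X), A]. Then f_Φ is sufficient and calibrated: E[Y | f_Φ, A] = f_Φ and E[Y | f_Φ] = E[Y | f_Φ, A] almost surely. -/
open MeasureTheory

/-- For any measurable map Φ : 𝒳 → 𝒳', the score f_Φ := E[Y | Φ(X), A] is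
calibrated (E[Y | f_Φ, A] = f_Φ a.s.) and sufficient (E[Y | f_Φ] = E[Y | f_Φ, A] a.s.). -/
theorem transformed_bayes_score_calibrated_and_sufficient
    {Ω 𝒳 𝒳' 𝒜 : Type*} [MeasurableSpace Ω] [MeasurableSpace 𝒳] [MeasurableSpace 𝒳']
    [MeasurableSpace 𝒜]
    (μ : Measure Ω) [IsProbabilityMeasure μ]
    (X : Ω → 𝒳) (A : Ω → 𝒜) (Y : Ω → ℝ) (Φ : 𝒳 → 𝒳')
    (hX : Measurable X) (hA : Measurable A) (hY : Measurable Y) (hΦ : Measurable Φ)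
    (hY01 : ∀ ω, Y ω = 0 ∨ Y ω = 1)
    (fΦ : Ω → ℝ)
    (hfΦ : fΦ = μ[Y | MeasurableSpace.comap (fun ω => (Φ (X ω), A ω)) inferInstance]) :
    (μ[Y | MeasurableSpace.comap (fun ω => (fΦ ω, A ω)) inferInstance] =ᵐ[μ] fΦ) ∧
    (μ[Y | MeasurableSpace.comap fΦ inferInstance] =ᵐ[μ]
      μ[Y | MeasurableSpace.comap (fun ω => (fΦ ω, A ω)) inferInstance]) := by
  have hpair : Measurable (fun ω => (Φ (X ω), A ω)) := (hΦ.comp hX).prodMk hA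
  have hm : MeasurableSpace.comap (fun ω => (Φ (X ω), A ω))
      (inferInstance : MeasurableSpace (𝒳' × 𝒜)) ≤ ‹MeasurableSpace Ω› := hpair.comap_le
  set m : MeasurableSpace Ω :=
    MeasurableSpace.comap (fun ω => (Φ (X ω), A ω)) inferInstance with hm_def
  set mfA : MeasurableSpace Ω :=
    MeasurableSpace.comap (fun ω => (fΦ ω, A ω)) inferInstance with hmfA_def
  set mf : MeasurableSpace Ω := MeasurableSpace.comap fΦ inferInstance with hmf_def
  -- the pair map is measurable w.r.t. m
  have hpair_m : Measurable[m] (fun ω => (Φ (X ω), A ω)) :=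
    Measurable.of_comap_le le_rfl
  have hA_m : Measurable[m] A := measurable_snd.comp hpair_m
  -- fΦ is m-measurable
  have hfΦ_m : Measurable[m] fΦ := by
    rw [hfΦ]
    exact stronglyMeasurable_condExp.measurable
  -- mfA ≤ m
  have hmfA_le : mfA ≤ m := by
    rw [hmfA_def]
    exact (hfΦ_m.prodMk hA_m).comap_le
  have hmfA := hmfA_le.trans hm
  -- fΦ is mfA-measurable
  have hpair_mfA : Measurable[mfA] (fun ω => (fΦ ω, A ω)) :=
    Measurable.of_comap_le le_rfl
  have hfΦ_mfA : Measurable[mfA] fΦ := measurable_fst.comp hpair_mfA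
  -- mf ≤ mfA
  have hmf_le : mf ≤ mfA := by
    rw [hmf_def]
    exact hfΦ_mfA.comap_le
  have hmf := hmf_le.trans hmfA
  have hfΦ_mf : Measurable[mf] fΦ := Measurable.of_comap_le le_rfl
  -- Y is integrable
  have hYint : Integrable Y μ := by
    refine (integrable_const (1 : ℝ)).mono' hY.aestronglyMeasurable ?_
    filter_upwards with ω
    rcases hY01 ω with h | h <;> simp [h]
  have hfΦint : Integrable fΦ μ := by
    rw [hfΦ]; exact integrable_condExp
  -- calibration
  have hcal : μ[Y | mfA] =ᵐ[μ] fΦ := by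
    have h1 : μ[μ[Y | m] | mfA] =ᵐ[μ] μ[Y | mfA] :=
      condExp_condExp_of_le hmfA_le hm
    have h2 : μ[fΦ | mfA] = fΦ :=
      condExp_of_stronglyMeasurable hmfA hfΦ_mfA.stronglyMeasurable hfΦint
    calc μ[Y | mfA] =ᵐ[μ] μ[μ[Y | m] | mfA] := h1.symm
      _ = μ[fΦ | mfA] := by rw [← hfΦ]
      _ = fΦ := h2
  refine ⟨hcal, ?_⟩
  have hsuf : μ[Y | mf] =ᵐ[μ] fΦ := by
    have h1 : μ[μ[Y | m] | mf] =ᵐ[μ] μ[Y | mf] :=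
      condExp_condExp_of_le (hmf_le.trans hmfA_le) hm
    have h2 : μ[fΦ | mf] = fΦ :=
      condExp_of_stronglyMeasurable hmf hfΦ_mf.stronglyMeasurable hfΦint
    calc μ[Y | mf] =ᵐ[μ] μ[μ[Y | m] | mf] := h1.symm
      _ = μ[fΦ | mf] := by rw [← hfΦ]
      _ = fΦ := h2
  exact hsuf.trans hcal.symm
end

section
/- Let f = f(X) be a score function of X only, and f^B = E[Y | X, A] the calibrated Bayes score. Then E[(E[Y | f, A] - E[Y | f^B, A])^2] ≤ 4 · E[(f - f^B)^2]. -/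
open MeasureTheory

/-- For a score f = f(X) of the features only and the calibrated Bayes score
f^B = E[Y | X, A], one has E[(E[Y | f, A] - E[Y | f^B, A])²] ≤ 4 E[(f - f^B)²]. -/
theorem condexp_l2_bound
    {Ω 𝒳 𝒜 : Type*} [MeasurableSpace Ω] [MeasurableSpace 𝒳] [MeasurableSpace 𝒜]
    (μ : Measure Ω) [IsProbabilityMeasure μ]
    (X : Ω → 𝒳) (A : Ω → 𝒜) (Y : Ω → ℝ) (f : 𝒳 → ℝ)
    (hX : Measurable X) (hA : Measurable A) (hY : Measurable Y) (hf : Measurable f)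
    (hY01 : ∀ ω, Y ω = 0 ∨ Y ω = 1)
    (hf01 : ∀ x, f x ∈ Set.Icc (0 : ℝ) 1)
    (fB : Ω → ℝ)
    (hfB : fB = μ[Y | MeasurableSpace.comap (fun ω => (X ω, A ω)) inferInstance]) :
    ∫ ω, ((μ[Y | MeasurableSpace.comap (fun ω => (f (X ω), A ω)) inferInstance]) ω -
          (μ[Y | MeasurableSpace.comap (fun ω => (fB ω, A ω)) inferInstance]) ω) ^ 2 ∂μ ≤
      4 * ∫ ω, (f (X ω) - fB ω) ^ 2 ∂μ := by
  rename_i m0 m𝒳 m𝒜 mP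
  set mXA : MeasurableSpace Ω := MeasurableSpace.comap (fun ω => (X ω, A ω)) inferInstance
    with hmXAdef
  set mfA : MeasurableSpace Ω := MeasurableSpace.comap (fun ω => (f (X ω), A ω)) inferInstance
    with hmfAdef
  set mB : MeasurableSpace Ω := MeasurableSpace.comap (fun ω => (fB ω, A ω)) inferInstance
    with hmBdef
  -- σ-algebra comparisons
  have hmXA_le : mXA ≤ m0 := (hX.prodMk hA).comap_le
  have hXA_self : Measurable[mXA] (fun ω => (X ω, A ω)) := measurable_iff_comap_le.2 le_rfl
  have hX' : Measurable[mXA] X := measurable_fst.comp hXA_self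
  have hA' : Measurable[mXA] A := measurable_snd.comp hXA_self
  have hfB_smXA : StronglyMeasurable[mXA] fB := by rw [hfB]; exact stronglyMeasurable_condExp
  have hmfA_le_XA : mfA ≤ mXA := ((hf.comp hX').prodMk hA').comap_le
  have hmB_le_XA : mB ≤ mXA := (hfB_smXA.measurable.prodMk hA').comap_le
  have hmfA_le : mfA ≤ m0 := hmfA_le_XA.trans hmXA_le
  have hmB_le : mB ≤ m0 := hmB_le_XA.trans hmXA_le
  have hfX_sm : StronglyMeasurable[mfA] (fun ω => f (X ω)) :=
    (measurable_fst.comp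
      (measurable_iff_comap_le.2 le_rfl : Measurable[mfA] (fun ω => (f (X ω), A ω)))
      ).stronglyMeasurable
  have hfB_smB : StronglyMeasurable[mB] fB :=
    (measurable_fst.comp
      (measurable_iff_comap_le.2 le_rfl : Measurable[mB] (fun ω => (fB ω, A ω)))
      ).stronglyMeasurable
  -- integrability of the basic functions
  have hYbd : ∀ᵐ ω ∂μ, ‖Y ω‖ ≤ 1 := ae_of_all _ fun ω => by
    rcases hY01 ω with h | h <;> simp [h]
  have hY_int : Integrable Y μ :=
    Integrable.mono' (integrable_const 1) hY.aestronglyMeasurable hYbd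
  have hfX_int : Integrable (fun ω => f (X ω)) μ :=
    Integrable.mono' (integrable_const 1) (hf.comp hX).aestronglyMeasurable
      (ae_of_all _ fun ω => by
        have := hf01 (X ω); rw [Real.norm_eq_abs, abs_le]
        exact ⟨by linarith [this.1], this.2⟩)
  have hfB_int : Integrable fB μ := by rw [hfB]; exact integrable_condExp
  -- fB is a.e. in [0,1]
  have hfB0 : 0 ≤ᵐ[μ] fB := by
    rw [hfB]; exact condExp_nonneg (f := Y) (m := mXA) (ae_of_all _ fun ω => by rcases hY01 ω with h | h <;> simp [h])
  have hfB1 : fB ≤ᵐ[μ] fun _ => (1 : ℝ) := by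
    have h := condExp_mono (m := mXA) hY_int (integrable_const (1 : ℝ))
      (ae_of_all _ fun ω => by rcases hY01 ω with h | h <;> simp [h])
    rw [condExp_const hmXA_le] at h
    rw [hfB]; exact h
  -- the difference Z and its conditional expectation E
  set Z : Ω → ℝ := fun ω => f (X ω) - fB ω with hZdef
  set E : Ω → ℝ := μ[Z | mfA] with hEdef
  have hZ_int : Integrable Z μ := hfX_int.sub hfB_int
  have hZbd : ∀ᵐ ω ∂μ, |Z ω| ≤ 1 := by
    filter_upwards [hfB0, hfB1] with ω h0 h1
    simp only [Pi.zero_apply] at h0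
    have h1 : fB ω ≤ 1 := h1
    have hfx := hf01 (X ω)
    rw [abs_le]
    exact ⟨by simp only [hZdef]; linarith [hfx.1], by simp only [hZdef]; linarith [hfx.2]⟩
  have hE_int : Integrable E μ := integrable_condExp
  have hEbd : ∀ᵐ ω ∂μ, |E ω| ≤ 1 := by
    have hle : Z ≤ᵐ[μ] fun _ => (1 : ℝ) := hZbd.mono fun ω h => (abs_le.1 h).2
    have hge : (fun _ => (-1 : ℝ)) ≤ᵐ[μ] Z := hZbd.mono fun ω h => (abs_le.1 h).1
    have h1 := condExp_mono (m := mfA) hZ_int (integrable_const (1 : ℝ)) hle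
    have h2 := condExp_mono (m := mfA) (integrable_const (-1 : ℝ)) hZ_int hge
    rw [condExp_const hmfA_le] at h1
    rw [condExp_const hmfA_le] at h2
    filter_upwards [h1, h2] with ω h1 h2
    rw [abs_le]; exact ⟨h2, h1⟩
  -- measurability in the ambient σ-algebra
  have hZ_meas : AEStronglyMeasurable[m0] Z μ :=
    ((hf.comp hX).sub (hfB_smXA.measurable.mono hmXA_le le_rfl)).aestronglyMeasurable
  have hE_meas : AEStronglyMeasurable[m0] E μ :=
    (stronglyMeasurable_condExp.mono hmfA_le).aestronglyMeasurable
  -- integrability of products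
  have hZsq_int : Integrable (fun ω => Z ω ^ 2) μ :=
    Integrable.mono' (integrable_const 1) ((hZ_meas.mul hZ_meas).congr
      (ae_of_all _ fun ω => (sq (Z ω)).symm))
      (hZbd.mono fun ω h => by
        rw [Real.norm_eq_abs, abs_pow, ← one_pow 2]
        exact pow_le_pow_left₀ (abs_nonneg _) h 2)
  have hEZ_int : Integrable (fun ω => E ω * Z ω) μ :=
    Integrable.mono' (integrable_const 1) (hE_meas.mul hZ_meas)
      (by filter_upwards [hZbd, hEbd] with ω h1 h2
          rw [Real.norm_eq_abs, abs_mul]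
          exact mul_le_one₀ h2 (abs_nonneg _) h1)
  have hEE_int : Integrable (fun ω => E ω * E ω) μ :=
    Integrable.mono' (integrable_const 1) (hE_meas.mul hE_meas)
      (hEbd.mono fun ω h => by
        rw [Real.norm_eq_abs, abs_mul]
        exact mul_le_one₀ h (abs_nonneg _) h)
  -- pull-out property: ∫ E·Z = ∫ E·E
  have hpull : μ[E * Z | mfA] =ᵐ[μ] E * μ[Z | mfA] :=
    condExp_mul_of_stronglyMeasurable_left stronglyMeasurable_condExp hEZ_int hZ_int
  have hEZ_eq : ∫ ω, E ω * Z ω ∂μ = ∫ ω, E ω * E ω ∂μ := by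
    have h1 : ∫ ω, (μ[E * Z | mfA]) ω ∂μ = ∫ ω, E ω * Z ω ∂μ := integral_condExp hmfA_le
    have h2 : ∫ ω, (μ[E * Z | mfA]) ω ∂μ = ∫ ω, E ω * E ω ∂μ :=
      integral_congr_ae (hpull.mono fun ω h => by rw [h]; rfl)
    rw [← h1, h2]
  -- key identity: μ[Y|mfA] - μ[Y|mB] =ᵐ Z - E
  have hYmB : μ[Y | mB] =ᵐ[μ] fB := by
    have h1 : μ[μ[Y | mXA] | mB] =ᵐ[μ] μ[Y | mB] := condExp_condExp_of_le hmB_le_XA hmXA_le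
    have h2 : μ[fB | mB] = fB := condExp_of_stronglyMeasurable hmB_le hfB_smB hfB_int
    calc μ[Y | mB] =ᵐ[μ] μ[μ[Y | mXA] | mB] := h1.symm
      _ = μ[fB | mB] := by rw [← hfB]
      _ = fB := h2
  have hYmfA : μ[Y | mfA] =ᵐ[μ] fun ω => f (X ω) - E ω := by
    have h1 : μ[μ[Y | mXA] | mfA] =ᵐ[μ] μ[Y | mfA] := condExp_condExp_of_le hmfA_le_XA hmXA_le
    have h2 : μ[fB | mfA] =ᵐ[μ] fun ω => f (X ω) - E ω := by
      have hsub : μ[(fun ω => f (X ω)) - Z | mfA] =ᵐ[μ]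
          μ[fun ω => f (X ω) | mfA] - μ[Z | mfA] := condExp_sub hfX_int hZ_int mfA
      have hid : μ[fun ω => f (X ω) | mfA] = fun ω => f (X ω) :=
        condExp_of_stronglyMeasurable hmfA_le hfX_sm hfX_int
      have hfBeq : fB = (fun ω => f (X ω)) - Z := by
        funext ω; simp [hZdef]
      rw [hfBeq]
      refine hsub.trans ?_
      rw [hid]
      exact ae_of_all _ fun ω => rfl
    calc μ[Y | mfA] =ᵐ[μ] μ[μ[Y | mXA] | mfA] := h1.symm
      _ = μ[fB | mfA] := by rw [← hfB]
      _ =ᵐ[μ] fun ω => f (X ω) - E ω := h2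
  have hkey : (fun ω => (μ[Y | mfA]) ω - (μ[Y | mB]) ω) =ᵐ[μ] fun ω => Z ω - E ω := by
    filter_upwards [hYmB, hYmfA] with ω h1 h2
    simp only [h1, h2, hZdef]; ring
  -- rewrite the LHS integral
  have hL : ∫ ω, ((μ[Y | mfA]) ω - (μ[Y | mB]) ω) ^ 2 ∂μ = ∫ ω, (Z ω - E ω) ^ 2 ∂μ :=
    integral_congr_ae (hkey.mono fun ω h => by dsimp only at h ⊢; rw [h])
  rw [hL]
  -- expand the square and compute
  have hsub_int : Integrable (fun ω => Z ω ^ 2 - 2 * (E ω * Z ω)) μ :=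
    hZsq_int.sub (hEZ_int.const_mul 2)
  have hexp : ∫ ω, (Z ω - E ω) ^ 2 ∂μ
      = ∫ ω, Z ω ^ 2 ∂μ - 2 * ∫ ω, E ω * Z ω ∂μ + ∫ ω, E ω * E ω ∂μ := by
    have h1 : ∫ ω, (Z ω - E ω) ^ 2 ∂μ
        = ∫ ω, ((Z ω ^ 2 - 2 * (E ω * Z ω)) + E ω * E ω) ∂μ :=
      integral_congr_ae (ae_of_all _ fun ω => by ring)
    rw [h1, integral_add hsub_int hEE_int,
      integral_sub hZsq_int (hEZ_int.const_mul 2), integral_const_mul 2 _]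
  rw [hexp, hEZ_eq]
  have hEEnonneg : 0 ≤ ∫ ω, E ω * E ω ∂μ :=
    integral_nonneg fun ω => mul_self_nonneg _
  have hZsqnonneg : 0 ≤ ∫ ω, Z ω ^ 2 ∂μ := integral_nonneg fun ω => sq_nonneg _
  have : ∫ ω, (f (X ω) - fB ω) ^ 2 ∂μ = ∫ ω, Z ω ^ 2 ∂μ := rfl
  rw [this]
  linarith
end

section
/- Let f = f(X) be a score function of X only and f^B = E[Y | X, A]. Define the sufficiency gap suf_f(A) = E[|E[Y | f] - E[Y | f, A]|]. Then suf_f(A) ≤ 4 · sqrt(E[(f - f^B)^2]). -/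
open MeasureTheory

/-- Cauchy–Schwarz: L¹ norm bounded by L² norm on a probability space. -/
lemma aux_l1_le_sqrt_l2 {Ω : Type*} (m : MeasurableSpace Ω) (μ : Measure Ω)
    [IsProbabilityMeasure μ] {h : Ω → ℝ} (hm : MemLp h 2 μ) :
    ∫ ω, |h ω| ∂μ ≤ Real.sqrt (∫ ω, h ω ^ 2 ∂μ) := by
  have hpq : Real.HolderConjugate 2 2 := Real.HolderConjugate.two_two
  have habs : MemLp (fun ω => |h ω|) (ENNReal.ofReal 2) μ := by
    rw [show ENNReal.ofReal 2 = 2 by simp]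
    exact hm.abs
  have hone : MemLp (fun _ : Ω => (1 : ℝ)) (ENNReal.ofReal 2) μ := memLp_const 1
  have key := integral_mul_le_Lp_mul_Lq_of_nonneg hpq
    (f := fun ω => |h ω|) (g := fun _ => (1 : ℝ))
    (ae_of_all _ fun ω => abs_nonneg _) (ae_of_all _ fun _ => zero_le_one) habs hone
  have hpt : (fun a : Ω => |h a| ^ (2 : ℝ)) = fun a => h a ^ 2 := by
    funext a
    rw [show (2 : ℝ) = ((2 : ℕ) : ℝ) by norm_num, Real.rpow_natCast, sq_abs]
  simp only [mul_one, Real.one_rpow, integral_const, measure_univ, ENNReal.toReal_one,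
    smul_eq_mul, one_mul, hpt, probReal_univ] at key
  refine key.trans (le_of_eq ?_)
  rw [Real.sqrt_eq_rpow]

/-- Abstract form of the sufficiency gap bound. -/
lemma aux_suff_gap {Ω : Type*} {m0 : MeasurableSpace Ω} (μ : Measure Ω)
    [IsProbabilityMeasure μ] (m1 m2 mB : MeasurableSpace Ω)
    (h1B : m1 ≤ mB) (h2B : m2 ≤ mB) (hB : mB ≤ m0)
    (Y g : Ω → ℝ) (hY_int : Integrable Y μ) (hg_int : Integrable g μ)
    (hg1 : StronglyMeasurable[m1] g) (hg2 : StronglyMeasurable[m2] g)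
    (hmem : MemLp (fun ω => g ω - (μ[Y | mB]) ω) 2 μ) :
    ∫ ω, |(μ[Y | m1]) ω - (μ[Y | m2]) ω| ∂μ ≤
      4 * Real.sqrt (∫ ω, (g ω - (μ[Y | mB]) ω) ^ 2 ∂μ) := by
  set fB : Ω → ℝ := μ[Y | mB] with hfB
  have hfB_int : Integrable fB μ := integrable_condExp
  -- key identity
  have key : ∀ (m : MeasurableSpace Ω), m ≤ mB → StronglyMeasurable[m] g →
      (μ[Y | m]) - g =ᵐ[μ] μ[(fun ω => fB ω - g ω) | m] := by
    intro m hmB hgm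
    have hmle : m ≤ m0 := hmB.trans hB
    have h1 : μ[Y | m] =ᵐ[μ] μ[fB | m] := (condExp_condExp_of_le hmB hB).symm
    have h2 : μ[(fun ω => fB ω - g ω) | m] =ᵐ[μ] μ[fB | m] - μ[g | m] := condExp_sub hfB_int hg_int m
    have h3 : μ[g | m] = g := condExp_of_stronglyMeasurable hmle hgm hg_int
    filter_upwards [h1, h2] with ω e1 e2
    simp only [Pi.sub_apply] at e1 e2 ⊢
    rw [e1, e2, h3]
  -- split
  have hsplit : ∫ ω, |(μ[Y | m1]) ω - (μ[Y | m2]) ω| ∂μ ≤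
      (∫ ω, |(μ[Y | m1]) ω - g ω| ∂μ) + ∫ ω, |(μ[Y | m2]) ω - g ω| ∂μ := by
    have I1 : Integrable (fun ω => |(μ[Y | m1]) ω - g ω|) μ :=
      (integrable_condExp.sub hg_int).abs
    have I2 : Integrable (fun ω => |(μ[Y | m2]) ω - g ω|) μ :=
      (integrable_condExp.sub hg_int).abs
    have I0 : Integrable (fun ω => |(μ[Y | m1]) ω - (μ[Y | m2]) ω|) μ :=
      (integrable_condExp.sub integrable_condExp).abs
    rw [← integral_add I1 I2]
    refine integral_mono I0 (I1.add I2) fun ω => ?_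
    have := abs_sub_le ((μ[Y | m1]) ω) (g ω) ((μ[Y | m2]) ω)
    simpa [abs_sub_comm (g ω)] using this
  -- each term
  have hterm : ∀ (m : MeasurableSpace Ω),
      ((μ[Y | m]) - g =ᵐ[μ] μ[(fun ω => fB ω - g ω) | m]) →
      ∫ ω, |(μ[Y | m]) ω - g ω| ∂μ ≤ ∫ ω, |fB ω - g ω| ∂μ := by
    intro m hm
    have heq : ∫ ω, |(μ[Y | m]) ω - g ω| ∂μ = ∫ ω, |(μ[(fun ω => fB ω - g ω) | m]) ω| ∂μ := by
      refine integral_congr_ae ?_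
      filter_upwards [hm] with ω e
      simp only [Pi.sub_apply] at e
      rw [e]
    rw [heq]
    exact integral_abs_condExp_le _
  have ht1 := hterm m1 (key m1 h1B hg1)
  have ht2 := hterm m2 (key m2 h2B hg2)
  -- Cauchy–Schwarz
  have hmem' : MemLp (fun ω => fB ω - g ω) 2 μ := by
    have : (fun ω => fB ω - g ω) = fun ω => -(g ω - fB ω) := by funext ω; ring
    rw [this]
    exact hmem.neg
  have hcs : ∫ ω, |fB ω - g ω| ∂μ ≤ Real.sqrt (∫ ω, (g ω - fB ω) ^ 2 ∂μ) := by
    refine (aux_l1_le_sqrt_l2 m0 μ hmem').trans (le_of_eq ?_)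
    congr 1
    refine integral_congr_ae (ae_of_all _ fun ω => ?_)
    ring
  have hnn : 0 ≤ Real.sqrt (∫ ω, (g ω - fB ω) ^ 2 ∂μ) := Real.sqrt_nonneg _
  linarith [hsplit, ht1, ht2, hcs]

/-- Sufficiency gap bound: suf_f(A) = E[|E[Y|f] - E[Y|f,A]|] ≤ 4 √(E[(f - f^B)²]),
where f^B = E[Y | X, A] is the calibrated Bayes score. -/
theorem sufficiency_gap_le_l2
    {Ω 𝒳 𝒜 : Type*} [MeasurableSpace Ω] [MeasurableSpace 𝒳] [MeasurableSpace 𝒜]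
    (μ : Measure Ω) [IsProbabilityMeasure μ]
    (X : Ω → 𝒳) (A : Ω → 𝒜) (Y : Ω → ℝ) (f : 𝒳 → ℝ)
    (hX : Measurable X) (hA : Measurable A) (hY : Measurable Y) (hf : Measurable f)
    (hY01 : ∀ ω, Y ω = 0 ∨ Y ω = 1)
    (hf01 : ∀ x, f x ∈ Set.Icc (0 : ℝ) 1)
    (fB : Ω → ℝ)
    (hfB : fB = μ[Y | MeasurableSpace.comap (fun ω => (X ω, A ω)) inferInstance]) :
    ∫ ω, |(μ[Y | MeasurableSpace.comap (fun ω => f (X ω)) inferInstance]) ω -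
          (μ[Y | MeasurableSpace.comap (fun ω => (f (X ω), A ω)) inferInstance]) ω| ∂μ ≤
      4 * Real.sqrt (∫ ω, (f (X ω) - fB ω) ^ 2 ∂μ) := by
  have h1B : MeasurableSpace.comap (fun ω => f (X ω)) inferInstance ≤
      MeasurableSpace.comap (fun ω => (X ω, A ω)) inferInstance := by
    rw [show (fun ω => f (X ω)) =
      (fun p : 𝒳 × 𝒜 => f p.1) ∘ (fun ω => (X ω, A ω)) from rfl,
      ← MeasurableSpace.comap_comp]
    exact MeasurableSpace.comap_mono (hf.comp measurable_fst).comap_le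
  have h2B : MeasurableSpace.comap (fun ω => (f (X ω), A ω)) inferInstance ≤
      MeasurableSpace.comap (fun ω => (X ω, A ω)) inferInstance := by
    rw [show (fun ω => (f (X ω), A ω)) =
      (fun p : 𝒳 × 𝒜 => (f p.1, p.2)) ∘ (fun ω => (X ω, A ω)) from rfl,
      ← MeasurableSpace.comap_comp]
    exact MeasurableSpace.comap_mono ((hf.comp measurable_fst).prodMk measurable_snd).comap_le
  have hB : MeasurableSpace.comap (fun ω => (X ω, A ω)) inferInstance ≤ ‹MeasurableSpace Ω› :=
    (hX.prodMk hA).comap_le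
  have hg_meas : Measurable fun ω => f (X ω) := hf.comp hX
  have hg1 : StronglyMeasurable[MeasurableSpace.comap (fun ω => f (X ω)) inferInstance]
      fun ω => f (X ω) :=
    (Measurable.of_comap_le le_rfl).stronglyMeasurable
  have hg2 : StronglyMeasurable[MeasurableSpace.comap (fun ω => (f (X ω), A ω)) inferInstance]
      fun ω => f (X ω) := by
    have hpair : Measurable[MeasurableSpace.comap (fun ω => (f (X ω), A ω)) inferInstance]
        (fun ω => (f (X ω), A ω)) := Measurable.of_comap_le le_rfl
    exact (measurable_fst.comp hpair).stronglyMeasurable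
  have hY_int : Integrable Y μ := by
    refine memLp_one_iff_integrable.mp (MemLp.of_bound hY.aestronglyMeasurable 1 ?_)
    exact ae_of_all _ fun ω => by rcases hY01 ω with h | h <;> simp [h]
  have hg_int : Integrable (fun ω => f (X ω)) μ := by
    refine memLp_one_iff_integrable.mp (MemLp.of_bound hg_meas.aestronglyMeasurable 1 ?_)
    refine ae_of_all _ fun ω => ?_
    have := hf01 (X ω)
    rw [Real.norm_eq_abs, abs_le]
    exact ⟨by linarith [this.1], this.2⟩
  -- fB ∈ [0,1] a.e.
  have hY_nonneg : (0 : Ω → ℝ) ≤ᵐ[μ] Y := ae_of_all _ fun ω => by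
    rcases hY01 ω with h | h <;> simp [h]
  have hY_le_one : Y ≤ᵐ[μ] (fun _ => (1 : ℝ)) := ae_of_all _ fun ω => by
    rcases hY01 ω with h | h <;> simp [h]
  have hfB_nonneg : (0 : Ω → ℝ) ≤ᵐ[μ] fB := by
    rw [hfB]; exact condExp_nonneg hY_nonneg
  have hfB_le_one : fB ≤ᵐ[μ] (fun _ => (1 : ℝ)) := by
    rw [hfB]
    refine (condExp_mono hY_int (integrable_const 1) hY_le_one).trans ?_
    rw [condExp_const hB]
  have hfB_int : Integrable fB μ := by rw [hfB]; exact integrable_condExp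
  have hmem : MemLp (fun ω => f (X ω) - fB ω) 2 μ := by
    refine MemLp.of_bound (hg_meas.aestronglyMeasurable.sub hfB_int.aestronglyMeasurable) 1 ?_
    filter_upwards [hfB_nonneg, hfB_le_one] with ω h0 h1
    have hgb := hf01 (X ω)
    simp only [Pi.zero_apply] at h0
    rw [Real.norm_eq_abs, abs_le]
    exact ⟨by linarith [h1, hgb.1], by linarith [h0, hgb.2]⟩
  have := aux_suff_gap μ
    (MeasurableSpace.comap (fun ω => f (X ω)) inferInstance)
    (MeasurableSpace.comap (fun ω => (f (X ω), A ω)) inferInstance)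
    (MeasurableSpace.comap (fun ω => (X ω, A ω)) inferInstance)
    h1B h2B hB Y (fun ω => f (X ω)) hY_int hg_int hg1 hg2 (by rw [hfB] at hmem; exact hmem)
  rw [hfB]
  exact this
end

section
/- Let f = f(X) be a score, f^B = E[Y | X, A], and a be a value of the discrete attribute A with Pr[A = a] > 0. Define the per-group calibration gap cal_f(a; A) = E[|f - E[Y | f, A]| given A = a]. Then cal_f(a; A) ≤ sqrt(E[(f - f^B)^2] / Pr[A = a]). -/
open MeasureTheory ProbabilityTheory
open scoped NNReal

private lemma my_integrable_of_bdd {Ω : Type*} [MeasurableSpace Ω] {ν : Measure Ω}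
    [IsFiniteMeasure ν] {u : Ω → ℝ} {C : ℝ} (hmeas : AEStronglyMeasurable u ν)
    (hb : ∀ᵐ ω ∂ν, |u ω| ≤ C) : Integrable u ν :=
  Integrable.mono' (integrable_const C) hmeas
    (by filter_upwards [hb] with ω h using by rwa [Real.norm_eq_abs])

private lemma my_integral_abs_le_sqrt {Ω : Type*} [MeasurableSpace Ω] {ν : Measure Ω}
    [IsProbabilityMeasure ν] {u : Ω → ℝ} (h1 : Integrable u ν)
    (h2 : Integrable (fun ω => u ω ^ 2) ν) :
    ∫ ω, |u ω| ∂ν ≤ Real.sqrt (∫ ω, u ω ^ 2 ∂ν) := by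
  set c := ∫ ω, |u ω| ∂ν with hc
  have hc0 : 0 ≤ c := integral_nonneg fun ω => abs_nonneg _
  have habs : Integrable (fun ω => |u ω|) ν := h1.abs
  have hsub : Integrable (fun ω => u ω ^ 2 - 2 * c * |u ω|) ν :=
    h2.sub (habs.const_mul (2 * c))
  have key : 0 ≤ ∫ ω, (|u ω| - c) ^ 2 ∂ν := integral_nonneg fun ω => sq_nonneg _
  have hexp : ∫ ω, (|u ω| - c) ^ 2 ∂ν = (∫ ω, u ω ^ 2 ∂ν) - c ^ 2 := by
    have heq : (fun ω => (|u ω| - c) ^ 2)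
        = fun ω => (u ω ^ 2 - 2 * c * |u ω|) + c ^ 2 := by
      funext ω; rw [sub_sq, sq_abs]; ring
    rw [heq, integral_add hsub (integrable_const _),
      integral_sub h2 (habs.const_mul (2 * c)), integral_const, integral_const_mul]
    simp only [measure_univ, ENNReal.toReal_one, smul_eq_mul, one_mul, probReal_univ, mul_one, ← hc]
    ring
  have hle : c ^ 2 ≤ ∫ ω, u ω ^ 2 ∂ν := by linarith [hexp ▸ key]
  exact (Real.le_sqrt hc0 (le_trans (sq_nonneg c) hle)).mpr hle

private def mComap {Ω β : Type*} [MeasurableSpace β] (ψ : Ω → β) : MeasurableSpace Ω :=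
  MeasurableSpace.comap ψ inferInstance

/-- Per-group calibration gap bound: for a group a with Pr[A = a] > 0,
cal_f(a; A) = E[|f - E[Y|f,A]| ∣ A = a] ≤ √(E[(f - f^B)²] / Pr[A = a]). -/
theorem per_group_calibration_gap_le_l2
    {Ω 𝒳 𝒜 : Type*} [MeasurableSpace Ω] [MeasurableSpace 𝒳] [MeasurableSpace 𝒜]
    [MeasurableSingletonClass 𝒜]
    (μ : Measure Ω) [IsProbabilityMeasure μ]
    (X : Ω → 𝒳) (A : Ω → 𝒜) (Y : Ω → ℝ) (f : 𝒳 → ℝ) (a : 𝒜)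
    (hX : Measurable X) (hA : Measurable A) (hY : Measurable Y) (hf : Measurable f)
    (hY01 : ∀ ω, Y ω = 0 ∨ Y ω = 1)
    (hf01 : ∀ x, f x ∈ Set.Icc (0 : ℝ) 1)
    (ha : 0 < (μ (A ⁻¹' {a})).toReal)
    (fB : Ω → ℝ)
    (hfB : fB = μ[Y | MeasurableSpace.comap (fun ω => (X ω, A ω)) inferInstance]) :
    ∫ ω, |f (X ω) -
          (μ[Y | MeasurableSpace.comap (fun ω => (f (X ω), A ω)) inferInstance]) ω|
        ∂(μ[|A ⁻¹' {a}]) ≤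
      Real.sqrt ((∫ ω, (f (X ω) - fB ω) ^ 2 ∂μ) / (μ (A ⁻¹' {a})).toReal) := by
  set s : Set Ω := A ⁻¹' {a} with hs_def
  have hμs0 : μ s ≠ 0 := fun h => by simp [h] at ha
  haveI : IsProbabilityMeasure (μ[|s]) := cond_isProbabilityMeasure hμs0
  -- σ-algebras
  have hfB' : fB = μ[Y | mComap (fun ω => (X ω, A ω))] := hfB
  have hψ : Measurable (fun ω => (f (X ω), A ω)) := (hf.comp hX).prodMk hA
  have hm : mComap (fun ω => (f (X ω), A ω)) ≤ (inferInstance : MeasurableSpace Ω) :=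
    hψ.comap_le
  have hm' : mComap (fun ω => (X ω, A ω)) ≤ (inferInstance : MeasurableSpace Ω) :=
    (hX.prodMk hA).comap_le
  have hφ : Measurable (fun p : 𝒳 × 𝒜 => (f p.1, p.2)) :=
    (hf.comp measurable_fst).prodMk measurable_snd
  have hmm' : mComap (fun ω => (f (X ω), A ω)) ≤ mComap (fun ω => (X ω, A ω)) := by
    show MeasurableSpace.comap _ _ ≤ MeasurableSpace.comap _ _
    rw [show (fun ω => (f (X ω), A ω))
        = (fun p : 𝒳 × 𝒜 => (f p.1, p.2)) ∘ (fun ω => (X ω, A ω)) from rfl,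
      ← MeasurableSpace.comap_comp]
    exact MeasurableSpace.comap_mono hφ.comap_le
  set g : Ω → ℝ := μ[Y | mComap (fun ω => (f (X ω), A ω))] with hg_def
  -- measurability
  have hψm : Measurable[mComap (fun ω => (f (X ω), A ω))] (fun ω => (f (X ω), A ω)) :=
    fun t ht => ⟨t, ht, rfl⟩
  have hfXm : StronglyMeasurable[mComap (fun ω => (f (X ω), A ω))] (fun ω => f (X ω)) :=
    (measurable_fst.comp hψm).stronglyMeasurable
  have hfX : Measurable (fun ω => f (X ω)) := hf.comp hX
  have hg_sm : StronglyMeasurable[mComap (fun ω => (f (X ω), A ω))] g :=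
    stronglyMeasurable_condExp
  have hg_aesm : AEStronglyMeasurable g μ := (hg_sm.mono hm).aestronglyMeasurable
  have hfB_aesm : AEStronglyMeasurable fB μ := by
    rw [hfB']; exact (stronglyMeasurable_condExp.mono hm').aestronglyMeasurable
  -- bounds
  have hY1 : ∀ᵐ ω ∂μ, |Y ω| ≤ ((1 : ℝ≥0) : ℝ) :=
    Filter.Eventually.of_forall fun ω => by rcases hY01 ω with h | h <;> simp [h]
  have hg1 : ∀ᵐ ω ∂μ, |g ω| ≤ ((1 : ℝ≥0) : ℝ) := ae_bdd_condExp_of_ae_bdd hY1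
  have hfB1 : ∀ᵐ ω ∂μ, |fB ω| ≤ ((1 : ℝ≥0) : ℝ) := by
    rw [hfB']; exact ae_bdd_condExp_of_ae_bdd hY1
  have hfX1 : ∀ ω, |f (X ω)| ≤ 1 := fun ω =>
    abs_le.mpr ⟨by linarith [(hf01 (X ω)).1], (hf01 (X ω)).2⟩
  -- integrability
  have hg_int : Integrable g μ := integrable_condExp
  have hfB_int : Integrable fB μ := by rw [hfB']; exact integrable_condExp
  set w : Ω → ℝ := fun ω => f (X ω) - g ω with hw_def
  set h : Ω → ℝ := fun ω => g ω - fB ω with hh_def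
  have hw_aesm : AEStronglyMeasurable w μ := (hfX.aestronglyMeasurable).sub hg_aesm
  have hh_aesm : AEStronglyMeasurable h μ := hg_aesm.sub hfB_aesm
  have hw2 : ∀ᵐ ω ∂μ, |w ω| ≤ 2 := by
    filter_upwards [hg1] with ω h1
    simp only [hw_def]
    have h2 := hfX1 ω
    calc |f (X ω) - g ω| ≤ |f (X ω)| + |g ω| := abs_sub _ _
      _ ≤ 2 := by push_cast at h1; linarith
  have hh2 : ∀ᵐ ω ∂μ, |h ω| ≤ 2 := by
    filter_upwards [hg1, hfB1] with ω h1 h2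
    calc |g ω - fB ω| ≤ |g ω| + |fB ω| := abs_sub _ _
      _ ≤ 2 := by push_cast at h1 h2; linarith
  have hw_int : Integrable w μ := my_integrable_of_bdd hw_aesm hw2
  have hh_int : Integrable h μ := my_integrable_of_bdd hh_aesm hh2
  have sq_bdd : ∀ {v : Ω → ℝ}, (∀ᵐ ω ∂μ, |v ω| ≤ 2) → (∀ᵐ ω ∂μ, |v ω ^ 2| ≤ 4) := by
    intro v hv
    filter_upwards [hv] with ω h1
    rw [abs_pow]
    calc |v ω| ^ 2 ≤ 2 ^ 2 := pow_le_pow_left₀ (abs_nonneg _) h1 2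
      _ = 4 := by norm_num
  have hw2_int : Integrable (fun ω => w ω ^ 2) μ := by
    refine my_integrable_of_bdd ((hw_aesm.mul hw_aesm).congr ?_) (sq_bdd hw2)
    exact Filter.Eventually.of_forall fun ω => (sq (w ω)).symm
  have hh2_int : Integrable (fun ω => h ω ^ 2) μ := by
    refine my_integrable_of_bdd ((hh_aesm.mul hh_aesm).congr ?_) (sq_bdd hh2)
    exact Filter.Eventually.of_forall fun ω => (sq (h ω)).symm
  have hwh_int : Integrable (w * h) μ := by
    refine my_integrable_of_bdd (C := 4) (hw_aesm.mul hh_aesm) ?_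
    filter_upwards [hw2, hh2] with ω h1 h2
    simp only [Pi.mul_apply, abs_mul]
    calc |w ω| * |h ω| ≤ 2 * 2 := mul_le_mul h1 h2 (abs_nonneg _) (by norm_num)
      _ = 4 := by norm_num
  have hwh_int' : Integrable (fun ω => w ω * h ω) μ := hwh_int
  have hffB2 : ∀ᵐ ω ∂μ, |f (X ω) - fB ω| ≤ 2 := by
    filter_upwards [hfB1] with ω h1
    calc |f (X ω) - fB ω| ≤ |f (X ω)| + |fB ω| := abs_sub _ _
      _ ≤ 2 := by have := hfX1 ω; push_cast at h1; linarith
  have hffB_aesm : AEStronglyMeasurable (fun ω => f (X ω) - fB ω) μ :=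
    hfX.aestronglyMeasurable.sub hfB_aesm
  have hffB2_int : Integrable (fun ω => (f (X ω) - fB ω) ^ 2) μ := by
    refine my_integrable_of_bdd ((hffB_aesm.mul hffB_aesm).congr ?_) (sq_bdd hffB2)
    exact Filter.Eventually.of_forall fun ω => (sq _).symm
  -- tower property
  have htower : μ[fB | mComap (fun ω => (f (X ω), A ω))] =ᵐ[μ] g := by
    rw [hfB', hg_def]; exact condExp_condExp_of_le hmm' hm'
  have hgproj : μ[g | mComap (fun ω => (f (X ω), A ω))] = g :=
    condExp_of_stronglyMeasurable hm stronglyMeasurable_condExp integrable_condExp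
  have hh0 : μ[h | mComap (fun ω => (f (X ω), A ω))] =ᵐ[μ] 0 := by
    have h1 : μ[h | mComap (fun ω => (f (X ω), A ω))]
        =ᵐ[μ] μ[g | mComap (fun ω => (f (X ω), A ω))]
          - μ[fB | mComap (fun ω => (f (X ω), A ω))] := condExp_sub hg_int hfB_int _
    filter_upwards [h1, htower] with ω e1 e2
    simp only [Pi.sub_apply, Pi.zero_apply] at *
    rw [e1, hgproj, e2, sub_self]
  -- cross term is zero
  have hw_sm : StronglyMeasurable[mComap (fun ω => (f (X ω), A ω))] w := hfXm.sub hg_sm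
  have hcross : ∫ ω, w ω * h ω ∂μ = 0 := by
    have hmul : μ[w * h | mComap (fun ω => (f (X ω), A ω))]
        =ᵐ[μ] w * μ[h | mComap (fun ω => (f (X ω), A ω))] :=
      condExp_mul_of_stronglyMeasurable_left hw_sm hwh_int hh_int
    have he : ∫ ω, w ω * h ω ∂μ
        = ∫ ω, (μ[w * h | mComap (fun ω => (f (X ω), A ω))]) ω ∂μ :=
      (integral_condExp hm).symm
    rw [he, integral_congr_ae hmul]
    have hz : (w * μ[h | mComap (fun ω => (f (X ω), A ω))] : Ω → ℝ) =ᵐ[μ] 0 := by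
      filter_upwards [hh0] with ω hω
      simp only [Pi.mul_apply, Pi.zero_apply] at *
      rw [hω, mul_zero]
    rw [integral_congr_ae hz]; simp
  -- Pythagoras
  have hsum_int : Integrable (fun ω => w ω ^ 2 + 2 * (w ω * h ω)) μ :=
    hw2_int.add (hwh_int'.const_mul 2)
  have hw2_le : ∫ ω, w ω ^ 2 ∂μ ≤ ∫ ω, (f (X ω) - fB ω) ^ 2 ∂μ := by
    have hh2nn : 0 ≤ ∫ ω, h ω ^ 2 ∂μ := integral_nonneg fun ω => sq_nonneg _
    have hint : ∫ ω, (f (X ω) - fB ω) ^ 2 ∂μ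
        = (∫ ω, (w ω ^ 2 + 2 * (w ω * h ω)) ∂μ) + ∫ ω, h ω ^ 2 ∂μ := by
      rw [← integral_add hsum_int hh2_int]
      refine integral_congr_ae (Filter.Eventually.of_forall fun ω => ?_)
      simp only [hw_def, hh_def]
      ring
    have hint2 : ∫ ω, (w ω ^ 2 + 2 * (w ω * h ω)) ∂μ
        = ∫ ω, w ω ^ 2 ∂μ + 2 * ∫ ω, w ω * h ω ∂μ := by
      rw [integral_add hw2_int (hwh_int'.const_mul 2), integral_const_mul]
    rw [hint, hint2, hcross]
    linarith
  -- conditional measure step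
  have hac : μ[|s] ≪ μ := cond_absolutelyContinuous
  have hw_aesm' : AEStronglyMeasurable w (μ[|s]) := hw_aesm.mono_ac hac
  have hw_int' : Integrable w (μ[|s]) := my_integrable_of_bdd hw_aesm' (hac.ae_le hw2)
  have hw2_int' : Integrable (fun ω => w ω ^ 2) (μ[|s]) := by
    refine my_integrable_of_bdd (C := 4) ((hw_aesm'.mul hw_aesm').congr ?_) ?_
    · exact Filter.Eventually.of_forall fun ω => (sq _).symm
    · filter_upwards [hac.ae_le hw2] with ω h1
      rw [abs_pow]
      calc |w ω| ^ 2 ≤ 2 ^ 2 := pow_le_pow_left₀ (abs_nonneg _) h1 2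
        _ = 4 := by norm_num
  have hcondint : ∫ ω, w ω ^ 2 ∂(μ[|s])
      ≤ (∫ ω, (f (X ω) - fB ω) ^ 2 ∂μ) / (μ s).toReal := by
    have h1 : ∫ ω, w ω ^ 2 ∂(μ[|s])
        = (μ s).toReal⁻¹ * ∫ ω in s, w ω ^ 2 ∂μ := by
      rw [ProbabilityTheory.cond, integral_smul_measure, ENNReal.toReal_inv, smul_eq_mul]
    have h2 : ∫ ω in s, w ω ^ 2 ∂μ ≤ ∫ ω, w ω ^ 2 ∂μ :=
      setIntegral_le_integral hw2_int (Filter.Eventually.of_forall fun ω => sq_nonneg _)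
    rw [h1, div_eq_inv_mul]
    exact mul_le_mul_of_nonneg_left (h2.trans hw2_le)
      (inv_nonneg.mpr ENNReal.toReal_nonneg)
  -- combine
  calc ∫ ω, |f (X ω) - (μ[Y | mComap (fun ω => (f (X ω), A ω))]) ω| ∂(μ[|s])
      = ∫ ω, |w ω| ∂(μ[|s]) := rfl
    _ ≤ Real.sqrt (∫ ω, w ω ^ 2 ∂(μ[|s])) := my_integral_abs_le_sqrt hw_int' hw2_int'
    _ ≤ Real.sqrt ((∫ ω, (f (X ω) - fB ω) ^ 2 ∂μ) / (μ s).toReal) :=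
        Real.sqrt_le_sqrt hcondint
end

section
/- Let f^B = E[Y | X, A], q̄ = Pr[Y = 1] ∈ (0,1), q_A = Pr[Y = 1 | A], and define the separation gap sep_f(A) = E_{Y,A}[|E[f | Y, A] - E[f | Y]|]. Then sep_{f^B}(A) ≥ (E[Var[Y | X, A]] / Var[Y]) · E_A[|q_A - q̄|]. -/
open MeasureTheory Classical



private theorem int_mul_condexp {Ω : Type*} {m m0 : MeasurableSpace Ω} (hm : m ≤ m0)
    (μ : Measure Ω) [IsFiniteMeasure μ] {f g : Ω → ℝ}
    (hf : StronglyMeasurable[m] f) (hfg : Integrable (f * g) μ) (hg : Integrable g μ) :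
    ∫ ω, f ω * (μ[g|m]) ω ∂μ = ∫ ω, f ω * g ω ∂μ := by
  calc ∫ ω, f ω * (μ[g|m]) ω ∂μ
      = ∫ ω, (μ[f * g|m]) ω ∂μ :=
        (integral_congr_ae (condExp_mul_of_stronglyMeasurable_left hf hfg hg)).symm
    _ = ∫ ω, (f * g) ω ∂μ := integral_condExp hm
    _ = ∫ ω, f ω * g ω ∂μ := rfl

private theorem setIntegral_binary {Ω : Type*} [MeasurableSpace Ω]
    (μ : Measure Ω) {Y g : Ω → ℝ}
    (hY : Measurable Y) (hY01 : ∀ ω, Y ω = 0 ∨ Y ω = 1)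
    (hg : Integrable g μ) (hgY : Integrable (fun ω => g ω * Y ω) μ)
    {t : Set ℝ} (ht : MeasurableSet t) :
    ∫ ω in Y ⁻¹' t, g ω ∂μ =
      (if (1:ℝ) ∈ t then (1:ℝ) else 0) * (∫ ω, g ω * Y ω ∂μ)
      + (if (0:ℝ) ∈ t then (1:ℝ) else 0) * ∫ ω, g ω * (1 - Y ω) ∂μ := by
  have hgY' : Integrable (fun ω => g ω * (1 - Y ω)) μ := by
    simpa [mul_sub, mul_one, Pi.sub_def] using hg.sub hgY
  have hind : ∀ ω, Set.indicator (Y ⁻¹' t) g ω =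
      (if (1:ℝ) ∈ t then (1:ℝ) else 0) * (g ω * Y ω)
      + (if (0:ℝ) ∈ t then (1:ℝ) else 0) * (g ω * (1 - Y ω)) := by
    intro ω
    rcases hY01 ω with h | h <;>
      · simp only [Set.indicator_apply, Set.mem_preimage, h]
        split_ifs <;> simp_all
  calc ∫ ω in Y ⁻¹' t, g ω ∂μ = ∫ ω, Set.indicator (Y ⁻¹' t) g ω ∂μ :=
        (integral_indicator (hY ht)).symm
    _ = ∫ ω, ((if (1:ℝ) ∈ t then (1:ℝ) else 0) * (g ω * Y ω)
          + (if (0:ℝ) ∈ t then (1:ℝ) else 0) * (g ω * (1 - Y ω))) ∂μ :=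
        integral_congr_ae (Filter.Eventually.of_forall hind)
    _ = _ := by
        rw [integral_add (hgY.const_mul _) (hgY'.const_mul _), integral_const_mul,
          integral_const_mul]

/-- Proposition 2.2 (separation gap of the calibrated Bayes score):
sep_{f^B}(A) = E[|E[f^B|Y,A] - E[f^B|Y]|] ≥ (E[Var[Y|X,A]]/Var[Y]) · E_A[|q_A - q̄|],
where Var[Y|X,A] = f^B(1 - f^B), Var[Y] = q̄(1 - q̄), q_A = Pr[Y=1|A] = E[Y|A],
and q̄ = Pr[Y=1]. -/
theorem bayes_separation_gap_lower_bound
    {Ω 𝒳 𝒜 : Type*} [MeasurableSpace Ω] [MeasurableSpace 𝒳] [MeasurableSpace 𝒜]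
    (μ : Measure Ω) [IsProbabilityMeasure μ]
    (X : Ω → 𝒳) (A : Ω → 𝒜) (Y : Ω → ℝ)
    (hX : Measurable X) (hA : Measurable A) (hY : Measurable Y)
    (hY01 : ∀ ω, Y ω = 0 ∨ Y ω = 1)
    (fB : Ω → ℝ)
    (hfB : fB = μ[Y | MeasurableSpace.comap (fun ω => (X ω, A ω)) inferInstance])
    (qbar : ℝ) (hqbar : qbar = ∫ ω, Y ω ∂μ)
    (hqbar01 : qbar ∈ Set.Ioo (0 : ℝ) 1) :
    ((∫ ω, fB ω * (1 - fB ω) ∂μ) / (qbar * (1 - qbar))) *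
        ∫ ω, |(μ[Y | MeasurableSpace.comap A inferInstance]) ω - qbar| ∂μ ≤
      ∫ ω, |(μ[fB | MeasurableSpace.comap (fun ω => (Y ω, A ω)) inferInstance]) ω -
            (μ[fB | MeasurableSpace.comap Y inferInstance]) ω| ∂μ := by
  obtain ⟨hq0, hq1⟩ := hqbar01
  have hq1' : (0:ℝ) < 1 - qbar := by linarith
  -- σ-algebra facts
  have hmXA : MeasurableSpace.comap (fun ω => (X ω, A ω)) inferInstance ≤ ‹MeasurableSpace Ω› :=
    (hX.prodMk hA).comap_le
  have hmA : MeasurableSpace.comap A inferInstance ≤ ‹MeasurableSpace Ω› := hA.comap_le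
  have hmYA : MeasurableSpace.comap (fun ω => (Y ω, A ω)) inferInstance ≤ ‹MeasurableSpace Ω› :=
    (hY.prodMk hA).comap_le
  have hmY : MeasurableSpace.comap Y inferInstance ≤ ‹MeasurableSpace Ω› := hY.comap_le
  have hAXA : MeasurableSpace.comap A inferInstance ≤
      MeasurableSpace.comap (fun ω => (X ω, A ω)) inferInstance := by
    rintro s ⟨t, ht, rfl⟩
    exact ⟨Set.univ ×ˢ t, MeasurableSet.univ.prod ht, by ext ω; simp⟩
  have hAYA : MeasurableSpace.comap A inferInstance ≤
      MeasurableSpace.comap (fun ω => (Y ω, A ω)) inferInstance := by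
    rintro s ⟨t, ht, rfl⟩
    exact ⟨Set.univ ×ˢ t, MeasurableSet.univ.prod ht, by ext ω; simp⟩
  -- abbreviations
  set Q : Ω → ℝ := μ[Y | MeasurableSpace.comap A inferInstance] with hQdef
  set G : Ω → ℝ := μ[fB | MeasurableSpace.comap (fun ω => (Y ω, A ω)) inferInstance] with hGdef
  set H : Ω → ℝ := μ[fB | MeasurableSpace.comap Y inferInstance] with hHdef
  -- basic integrability and bounds
  have hYb : ∀ ω, ‖Y ω‖ ≤ 1 := fun ω => by rcases hY01 ω with h | h <;> simp [h]
  have hYi : Integrable Y μ :=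
    (integrable_const (1:ℝ)).mono' hY.aestronglyMeasurable (Filter.Eventually.of_forall hYb)
  have hfBi : Integrable fB μ := hfB ▸ integrable_condExp
  have hfBb : ∀ᵐ ω ∂μ, |fB ω| ≤ ((1 : NNReal) : ℝ) := by
    rw [hfB]
    exact ae_bdd_condExp_of_ae_bdd (Filter.Eventually.of_forall fun ω => by
      simpa using hYb ω)
  have hfBb' : ∀ᵐ ω ∂μ, ‖fB ω‖ ≤ 1 := by simpa using hfBb
  have hfBY : Integrable (fun ω => fB ω * Y ω) μ := hYi.bdd_mul hfBi.aestronglyMeasurable hfBb'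
  have hfBsq : Integrable (fun ω => fB ω * fB ω) μ :=
    hfBi.bdd_mul hfBi.aestronglyMeasurable hfBb'
  have hfB1Y : Integrable (fun ω => fB ω * (1 - Y ω)) μ := by
    simpa [mul_sub, mul_one, Pi.sub_def] using hfBi.sub hfBY
  -- ε : sign of Q - qbar
  set ε : Ω → ℝ := fun ω => if qbar ≤ Q ω then 1 else -1 with hεdef
  have hQsmA : StronglyMeasurable[MeasurableSpace.comap A inferInstance] Q :=
    stronglyMeasurable_condExp
  have hεmA : Measurable[MeasurableSpace.comap A inferInstance] ε :=
    Measurable.ite (measurableSet_le measurable_const hQsmA.measurable)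
      measurable_const measurable_const
  have hεsmA : StronglyMeasurable[MeasurableSpace.comap A inferInstance] ε :=
    hεmA.stronglyMeasurable
  have hεb : ∀ ω, ‖ε ω‖ ≤ 1 := fun ω => by
    rw [hεdef]; dsimp only; split_ifs <;> simp
  have hεi : Integrable ε μ :=
    (integrable_const (1:ℝ)).mono' ((hεmA.mono hmA le_rfl).stronglyMeasurable).aestronglyMeasurable
      (Filter.Eventually.of_forall hεb)
  have hεae : AEStronglyMeasurable ε μ := hεi.aestronglyMeasurable
  have hεY : Integrable (fun ω => ε ω * Y ω) μ :=
    hYi.bdd_mul hεae (Filter.Eventually.of_forall hεb)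
  have hεfB : Integrable (fun ω => ε ω * fB ω) μ :=
    hfBi.bdd_mul hεae (Filter.Eventually.of_forall hεb)
  have hεQ : Integrable (fun ω => ε ω * Q ω) μ :=
    integrable_condExp.bdd_mul hεae (Filter.Eventually.of_forall hεb)
  have hGi : Integrable G μ := integrable_condExp
  have hHi : Integrable H μ := integrable_condExp
  have hεG : Integrable (fun ω => ε ω * G ω) μ :=
    hGi.bdd_mul hεae (Filter.Eventually.of_forall hεb)
  have hεH : Integrable (fun ω => ε ω * H ω) μ :=
    hHi.bdd_mul hεae (Filter.Eventually.of_forall hεb)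
  -- basic integrals
  have hfBint : ∫ ω, fB ω ∂μ = qbar := by rw [hfB, integral_condExp hmXA, hqbar]
  have hY2 : ∫ ω, (1 : ℝ) - Y ω ∂μ = 1 - qbar := by
    rw [integral_sub (integrable_const 1) hYi, hqbar]; simp
  -- tower identities
  have hfBsm : StronglyMeasurable[MeasurableSpace.comap (fun ω => (X ω, A ω)) inferInstance] fB :=
    hfB ▸ stronglyMeasurable_condExp
  have F2 : ∫ ω, fB ω * fB ω ∂μ = ∫ ω, fB ω * Y ω ∂μ := by
    have h := int_mul_condexp hmXA μ hfBsm hfBY hYi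
    rwa [← hfB] at h
  have F4 : ∫ ω, ε ω * fB ω ∂μ = ∫ ω, ε ω * Y ω ∂μ := by
    have h := int_mul_condexp hmXA μ (hεsmA.mono hAXA) hεY hYi
    rwa [← hfB] at h
  have F5 : ∫ ω, ε ω * Q ω ∂μ = ∫ ω, ε ω * Y ω ∂μ := by
    have h := int_mul_condexp hmA μ hεsmA hεY hYi
    rwa [← hQdef] at h
  have F6 : ∫ ω, ε ω * G ω ∂μ = ∫ ω, ε ω * Y ω ∂μ := by
    have h := int_mul_condexp hmYA μ (hεsmA.mono hAYA) hεfB hfBi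
    rw [← hGdef] at h
    rw [h, F4]
  -- explicit formula for H = E[fB | Y]
  set c1 : ℝ := (∫ ω, fB ω * Y ω ∂μ) / qbar with hc1def
  set c0 : ℝ := (∫ ω, fB ω * (1 - Y ω) ∂μ) / (1 - qbar) with hc0def
  set H0 : Ω → ℝ := fun ω => Y ω * c1 + (1 - Y ω) * c0 with hH0def
  have hYmY : Measurable[MeasurableSpace.comap Y inferInstance] Y :=
    measurable_iff_comap_le.mpr le_rfl
  have hH0sm : StronglyMeasurable[MeasurableSpace.comap Y inferInstance] H0 :=
    ((hYmY.mul_const c1).add ((measurable_const.sub hYmY).mul_const c0)).stronglyMeasurable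
  have hH0i : Integrable H0 μ := by
    refine Integrable.add (hYi.mul_const c1) ?_
    have : Integrable (fun ω => (1 : ℝ) - Y ω) μ := (integrable_const 1).sub hYi
    exact this.mul_const c0
  have heY : ∀ ω, H0 ω * Y ω = c1 * Y ω := fun ω => by
    rcases hY01 ω with h | h <;> simp [hH0def, h]
  have he1Y : ∀ ω, H0 ω * (1 - Y ω) = c0 * (1 - Y ω) := fun ω => by
    rcases hY01 ω with h | h <;> simp [hH0def, h]
  have hH0Yi : Integrable (fun ω => H0 ω * Y ω) μ :=
    (integrable_congr (Filter.Eventually.of_forall fun ω => (heY ω).symm)).mp (hYi.const_mul c1)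
  have hfBYval : ∫ ω, fB ω * Y ω ∂μ = c1 * qbar := by
    rw [hc1def]; field_simp
  have hfB1Yval : ∫ ω, fB ω * (1 - Y ω) ∂μ = c0 * (1 - qbar) := by
    rw [hc0def]; field_simp
  have hH0Yval : ∫ ω, H0 ω * Y ω ∂μ = c1 * qbar := by
    rw [integral_congr_ae (Filter.Eventually.of_forall heY), integral_const_mul, ← hqbar]
  have hH0_1Yval : ∫ ω, H0 ω * (1 - Y ω) ∂μ = c0 * (1 - qbar) := by
    rw [integral_congr_ae (Filter.Eventually.of_forall he1Y), integral_const_mul, hY2]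
  have hHeq : H0 =ᵐ[μ] H := by
    rw [hHdef]
    refine ae_eq_condExp_of_forall_setIntegral_eq hmY hfBi (fun s _ _ => hH0i.integrableOn)
      ?_ hH0sm.aestronglyMeasurable
    rintro s ⟨t, ht, rfl⟩ -
    rw [setIntegral_binary μ hY hY01 hH0i hH0Yi ht, setIntegral_binary μ hY hY01 hfBi hfBY ht,
      hH0Yval, hfBYval, hH0_1Yval, hfB1Yval]
  have F7 : ∫ ω, ε ω * H ω ∂μ
      = c1 * (∫ ω, ε ω * Y ω ∂μ) + c0 * ((∫ ω, ε ω ∂μ) - ∫ ω, ε ω * Y ω ∂μ) := by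
    have h1 : ∫ ω, ε ω * H ω ∂μ = ∫ ω, ε ω * H0 ω ∂μ :=
      (integral_congr_ae (hHeq.mono fun ω h => by rw [h])).symm
    have h2 : ∀ ω, ε ω * H0 ω = c1 * (ε ω * Y ω) + c0 * (ε ω - ε ω * Y ω) := fun ω => by
      simp only [hH0def]; ring
    have hεsub : Integrable (fun ω => ε ω - ε ω * Y ω) μ := hεi.sub hεY
    have hisub : ∫ ω, (ε ω - ε ω * Y ω) ∂μ = (∫ ω, ε ω ∂μ) - ∫ ω, ε ω * Y ω ∂μ :=
      integral_sub hεi hεY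
    rw [h1, integral_congr_ae (Filter.Eventually.of_forall h2),
      integral_add (hεY.const_mul c1) (hεsub.const_mul c0), integral_const_mul,
      integral_const_mul, hisub]
  have F8 : ∫ ω, |Q ω - qbar| ∂μ = (∫ ω, ε ω * Y ω ∂μ) - qbar * ∫ ω, ε ω ∂μ := by
    have h1 : ∀ ω, |Q ω - qbar| = ε ω * Q ω - qbar * ε ω := fun ω => by
      rw [hεdef]; dsimp only; split_ifs with h
      · rw [abs_of_nonneg (by linarith)]; ring
      · rw [abs_of_neg (by linarith)]; ring
    rw [integral_congr_ae (Filter.Eventually.of_forall h1),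
      integral_sub hεQ (hεi.const_mul qbar), integral_const_mul, F5]
  have key : (∫ ω, fB ω * (1 - fB ω) ∂μ) / (qbar * (1 - qbar)) * ∫ ω, |Q ω - qbar| ∂μ
      = ∫ ω, ε ω * (G ω - H ω) ∂μ := by
    have hsplit : ∫ ω, ε ω * (G ω - H ω) ∂μ
        = (∫ ω, ε ω * G ω ∂μ) - ∫ ω, ε ω * H ω ∂μ := by
      rw [← integral_sub hεG hεH]
      exact integral_congr_ae (Filter.Eventually.of_forall fun ω => by ring)
    have hs : ∫ ω, fB ω * (1 - fB ω) ∂μ = qbar - c1 * qbar := by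
      have h : ∫ ω, fB ω * (1 - fB ω) ∂μ = (∫ ω, fB ω ∂μ) - ∫ ω, fB ω * fB ω ∂μ := by
        rw [← integral_sub hfBi hfBsq]
        exact integral_congr_ae (Filter.Eventually.of_forall fun ω => by ring)
      rw [h, hfBint, F2, hfBYval]
    have hc0s : c0 * (1 - qbar) = qbar - c1 * qbar := by
      rw [← hfB1Yval]
      have h : ∫ ω, fB ω * (1 - Y ω) ∂μ = (∫ ω, fB ω ∂μ) - ∫ ω, fB ω * Y ω ∂μ := by
        rw [← integral_sub hfBi hfBY]
        exact integral_congr_ae (Filter.Eventually.of_forall fun ω => by ring)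
      rw [h, hfBint, hfBYval]
    rw [F8, hsplit, F6, F7, hs]
    have hc0 : c0 = (qbar - c1 * qbar) / (1 - qbar) := by
      field_simp at hc0s ⊢; linarith
    rw [hc0]
    field_simp
    ring
  have hGH : Integrable (fun ω => G ω - H ω) μ := hGi.sub hHi
  have hpt : ∀ ω, ε ω * (G ω - H ω) ≤ |G ω - H ω| := fun ω => by
    have h1 : |ε ω * (G ω - H ω)| = |G ω - H ω| := by
      rw [abs_mul, hεdef]; dsimp only; split_ifs <;> simp
    exact (le_abs_self _).trans_eq h1
  calc ((∫ ω, fB ω * (1 - fB ω) ∂μ) / (qbar * (1 - qbar))) * ∫ ω, |Q ω - qbar| ∂μ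
      = ∫ ω, ε ω * (G ω - H ω) ∂μ := key
    _ ≤ ∫ ω, |G ω - H ω| ∂μ :=
        integral_mono_ae (hGH.bdd_mul hεae (Filter.Eventually.of_forall hεb)) hGH.abs
          (Filter.Eventually.of_forall hpt)
end

section
/- Fix θ, θ̂ ∈ S¹ ⊂ ℝ². Define f_u(x) = 1/2 + ⟨u, x⟩/4 for u, x ∈ ℝ², and let X be uniform on S¹ with Y | X ∼ Bernoulli(f_θ(X)). Then the L¹ calibration distance satisfies E[|f_{θ̂}(X) - f_θ(X)|] = ‖θ̂ - θ‖₂ / (2π) ≥ sqrt(1 - ⟨θ, θ̂⟩²) / (2π). -/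
open Real

lemma integral_abs_cos : ∫ t in (0:ℝ)..(2*π), |cos t| = 4 := by
  have hc : Continuous fun t : ℝ => |cos t| := Real.continuous_cos.abs
  have h1 : ∫ t in (0:ℝ)..(π/2), |cos t| = 1 := by
    rw [intervalIntegral.integral_congr (g := cos)]
    · rw [integral_cos]; simp
    · intro x hx
      rw [Set.uIcc_of_le (by positivity)] at hx
      exact abs_of_nonneg (Real.cos_nonneg_of_mem_Icc ⟨by linarith [hx.1, pi_pos], hx.2⟩)
  have h2 : ∫ t in (π/2:ℝ)..(3*π/2), |cos t| = 2 := by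
    rw [intervalIntegral.integral_congr (g := fun t => -cos t)]
    · rw [intervalIntegral.integral_neg, integral_cos]
      rw [show (3*π/2 : ℝ) = π + π/2 by ring, Real.sin_add_pi_div_two, Real.sin_pi_div_two]
      norm_num [Real.cos_pi]
    · intro x hx
      rw [Set.uIcc_of_le (by linarith [pi_pos])] at hx
      have : cos x ≤ 0 := Real.cos_nonpos_of_pi_div_two_le_of_le hx.1 (by linarith [hx.2, pi_pos])
      simp [abs_of_nonpos this]
  have h3 : ∫ t in (3*π/2:ℝ)..(2*π), |cos t| = 1 := by
    rw [intervalIntegral.integral_congr (g := cos)]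
    · rw [integral_cos]
      rw [show (3*π/2 : ℝ) = π + π/2 by ring, Real.sin_add_pi_div_two]
      norm_num [Real.sin_two_pi, Real.cos_pi]
    · intro x hx
      rw [Set.uIcc_of_le (by linarith [pi_pos])] at hx
      show |cos x| = cos x
      rw [(Real.cos_sub_two_pi x).symm]
      refine abs_of_nonneg (Real.cos_nonneg_of_neg_pi_div_two_le_of_le ?_ ?_) <;>
        [linarith [hx.1]; linarith [hx.2, pi_pos]]
  have i1 : IntervalIntegrable (fun t : ℝ => |cos t|) MeasureTheory.volume 0 (π/2) :=
    hc.intervalIntegrable _ _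
  have i2 : IntervalIntegrable (fun t : ℝ => |cos t|) MeasureTheory.volume (π/2) (3*π/2) :=
    hc.intervalIntegrable _ _
  have i3 : IntervalIntegrable (fun t : ℝ => |cos t|) MeasureTheory.volume (3*π/2) (2*π) :=
    hc.intervalIntegrable _ _
  rw [← intervalIntegral.integral_add_adjacent_intervals (b := 3*π/2) (i1.trans i2) i3,
      ← intervalIntegral.integral_add_adjacent_intervals (b := π/2) i1 i2, h1, h2, h3]
  norm_num

lemma integral_abs_lincomb (a b : ℝ) :
    ∫ t in (0:ℝ)..(2*π), |a * cos t + b * sin t| = 4 * Real.sqrt (a^2 + b^2) := by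
  set z : ℂ := ⟨a, b⟩ with hz
  have hre : ‖z‖ * cos z.arg = a := Complex.norm_mul_cos_arg z
  have him : ‖z‖ * sin z.arg = b := Complex.norm_mul_sin_arg z
  have habs : ‖z‖ = Real.sqrt (a^2 + b^2) := by
    rw [Complex.norm_def, Complex.normSq_apply]
    norm_num [hz, sq]
  have hcongr : ∀ t : ℝ, |a * cos t + b * sin t| = ‖z‖ * |cos (t - z.arg)| := by
    intro t
    rw [Real.cos_sub, ← hre, ← him, show ‖z‖ * cos z.arg * cos t + ‖z‖ * sin z.arg * sin t = ‖z‖ * (cos t * cos z.arg + sin t * sin z.arg) by ring, abs_mul, abs_of_nonneg (norm_nonneg z)]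
  calc ∫ t in (0:ℝ)..(2*π), |a * cos t + b * sin t|
      = ∫ t in (0:ℝ)..(2*π), ‖z‖ * |cos (t - z.arg)| := by
        exact intervalIntegral.integral_congr fun t _ => hcongr t
    _ = ‖z‖ * ∫ t in (0:ℝ)..(2*π), |cos (t - z.arg)| := by
        rw [intervalIntegral.integral_const_mul]
    _ = ‖z‖ * ∫ t in (0-z.arg:ℝ)..(2*π - z.arg), |cos t| := by
        rw [intervalIntegral.integral_comp_sub_right (fun t => |cos t|) z.arg]
    _ = ‖z‖ * ∫ t in (0:ℝ)..(2*π), |cos t| := by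
        congr 1
        have hper : Function.Periodic (fun t : ℝ => |cos t|) (2*π) :=
          Real.cos_periodic.comp abs
        have := hper.intervalIntegral_add_eq (0 - z.arg) 0
        simpa [sub_eq_add_neg, add_comm, add_left_comm, add_assoc] using this
    _ = 4 * Real.sqrt (a^2 + b^2) := by rw [integral_abs_cos, habs]; ring

/-- For unit vectors θ, θ̂ ∈ S¹ and scores f_u(x) = 1/2 + ⟨u, x⟩/4, with X uniform
on the unit circle (uniform angle parametrization), the L¹ distance satisfies
E[|f_{θ̂}(X) - f_θ(X)|] = ‖θ̂ - θ‖₂/(2π) ≥ √(1 - ⟨θ, θ̂⟩²)/(2π). -/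
theorem calibration_l1_distance_on_circle
    (θ θhat : ℝ × ℝ)
    (hθ : θ.1 ^ 2 + θ.2 ^ 2 = 1) (hθhat : θhat.1 ^ 2 + θhat.2 ^ 2 = 1) :
    ((1 / (2 * π)) * ∫ t in (0 : ℝ)..(2 * π),
        |(1 / 2 + (θhat.1 * cos t + θhat.2 * sin t) / 4) -
         (1 / 2 + (θ.1 * cos t + θ.2 * sin t) / 4)| =
      Real.sqrt ((θhat.1 - θ.1) ^ 2 + (θhat.2 - θ.2) ^ 2) / (2 * π)) ∧
    Real.sqrt (1 - (θ.1 * θhat.1 + θ.2 * θhat.2) ^ 2) / (2 * π) ≤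
      Real.sqrt ((θhat.1 - θ.1) ^ 2 + (θhat.2 - θ.2) ^ 2) / (2 * π) := by
  constructor
  · have hint : ∫ t in (0 : ℝ)..(2 * π),
        |(1 / 2 + (θhat.1 * cos t + θhat.2 * sin t) / 4) -
         (1 / 2 + (θ.1 * cos t + θ.2 * sin t) / 4)|
        = ∫ t in (0 : ℝ)..(2 * π),
          |(θhat.1 - θ.1) * cos t + (θhat.2 - θ.2) * sin t| / 4 := by
      apply intervalIntegral.integral_congr
      intro t _
      show |(1 / 2 + (θhat.1 * cos t + θhat.2 * sin t) / 4) -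
         (1 / 2 + (θ.1 * cos t + θ.2 * sin t) / 4)| = _
      rw [show (1 / 2 + (θhat.1 * cos t + θhat.2 * sin t) / 4) -
         (1 / 2 + (θ.1 * cos t + θ.2 * sin t) / 4)
         = ((θhat.1 - θ.1) * cos t + (θhat.2 - θ.2) * sin t) / 4 by ring, abs_div]
      norm_num
    rw [hint, intervalIntegral.integral_div, integral_abs_lincomb]
    field_simp
  · gcongr
    nlinarith [sq_nonneg (1 - (θ.1 * θhat.1 + θ.2 * θhat.2)), sq_nonneg (θhat.1 - θ.1), sq_nonneg (θhat.2 - θ.2)]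
end

section
/- Let θ₁, θ₂ ∈ S¹ and let D_θ denote the distribution on S¹ × {0,1} where X is uniform on S¹ and Y | X ∼ Bernoulli(1/2 + ⟨θ, X⟩/4). Then the KL divergence between n i.i.d. samples satisfies KL(D_{θ₁}^⊗n, D_{θ₂}^⊗n) ≤ (n/12) · ‖θ₁ - θ₂‖₂². -/
open Real

open intervalIntegral

lemma kl_core (p q : ℝ) (hp1 : 1/4 ≤ p) (hp2 : p ≤ 3/4)
    (hq1 : 1/4 ≤ q) (hq2 : q ≤ 3/4) (hpq : p ≤ q) :
    p * Real.log (p/q) + (1-p) * Real.log ((1-p)/(1-q)) ≤ 8/3 * (p-q)^2 := by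
  have hppos : (0:ℝ) < p := by linarith
  have hqpos : (0:ℝ) < q := by linarith
  have hp1' : (0:ℝ) < 1 - p := by linarith
  have hq1' : (0:ℝ) < 1 - q := by linarith
  set F : ℝ → ℝ := fun s => -(p * Real.log s) - (1-p) * Real.log (1-s) with hF
  have hLHS : p * Real.log (p/q) + (1-p) * Real.log ((1-p)/(1-q)) = F q - F p := by
    rw [Real.log_div hppos.ne' hqpos.ne', Real.log_div hp1'.ne' hq1'.ne']
    simp only [hF]; ring
  have hderiv : ∀ s ∈ Set.uIcc p q, HasDerivAt F (-p/s + (1-p)/(1-s)) s := by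
    intro s hs
    rw [Set.uIcc_of_le hpq] at hs
    have hs1 : (0:ℝ) < s := by have := hs.1; linarith
    have hs2 : (0:ℝ) < 1 - s := by have := hs.2; linarith
    have h1 : HasDerivAt (fun s : ℝ => Real.log s) (1/s) s := by
      simpa using Real.hasDerivAt_log hs1.ne'
    have h2 : HasDerivAt (fun s : ℝ => Real.log (1-s)) (-(1/(1-s))) s := by
      have hin : HasDerivAt (fun s : ℝ => 1 - s) (-1) s := by
        exact (hasDerivAt_id s).const_sub 1
      have := (Real.hasDerivAt_log hs2.ne').comp s hin
      rw [show (-(1/(1-s))) = (1-s)⁻¹ * -1 by ring]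
      exact this
    have := ((h1.const_mul p).neg).sub (h2.const_mul (1-p))
    exact this.congr_deriv (by ring)
  have hcont : ContinuousOn (fun s => -p/s + (1-p)/(1-s)) (Set.uIcc p q) := by
    rw [Set.uIcc_of_le hpq]
    apply ContinuousOn.add
    · refine ContinuousOn.div continuousOn_const continuousOn_id ?_
      intro s hs
      have h := hs.1
      have : (0:ℝ) < s := by linarith
      simpa using this.ne'
    · refine ContinuousOn.div continuousOn_const (continuousOn_const.sub continuousOn_id) ?_
      intro s hs
      have h := hs.2
      have : (0:ℝ) < 1 - s := by linarith
      exact this.ne'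
  have hint : IntervalIntegrable (fun s => -p/s + (1-p)/(1-s)) MeasureTheory.volume p q :=
    hcont.intervalIntegrable
  have hftc : ∫ s in p..q, (-p/s + (1-p)/(1-s)) = F q - F p :=
    intervalIntegral.integral_eq_sub_of_hasDerivAt hderiv hint
  rw [hLHS, ← hftc]
  have hmono : ∫ s in p..q, (-p/s + (1-p)/(1-s)) ≤ ∫ s in p..q, 16/3 * (s - p) := by
    apply intervalIntegral.integral_mono_on hpq hint
    · exact ((continuous_const.mul (continuous_id.sub continuous_const)).intervalIntegrable p q)
    · intro s hs
      have hs1 : 1/4 ≤ s := by have := hs.1; linarith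
      have hs2 : s ≤ 3/4 := by have := hs.2; linarith
      have hsp : (0:ℝ) < s := by linarith
      have hs2' : (0:ℝ) < 1 - s := by linarith
      have heq : -p/s + (1-p)/(1-s) = (s - p) / (s * (1-s)) := by
        field_simp; ring
      rw [heq]
      rw [div_le_iff₀ (by nlinarith)]
      have hsp' : 0 ≤ s - p := by linarith [hs.1]
      nlinarith [mul_nonneg hsp' (show (0:ℝ) ≤ s * (1 - s) - 3/16 by nlinarith)]
  refine hmono.trans ?_
  have : ∫ s in p..q, 16/3 * (s - p) = 8/3 * (p - q)^2 := by
    rw [intervalIntegral.integral_const_mul,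
      intervalIntegral.integral_sub intervalIntegrable_id intervalIntegrable_const,
      integral_id, intervalIntegral.integral_const]
    simp only [smul_eq_mul]
    ring
  rw [this]

lemma kl_bern (p q : ℝ) (hp1 : 1/4 ≤ p) (hp2 : p ≤ 3/4)
    (hq1 : 1/4 ≤ q) (hq2 : q ≤ 3/4) :
    p * Real.log (p/q) + (1-p) * Real.log ((1-p)/(1-q)) ≤ 8/3 * (p-q)^2 := by
  rcases le_total p q with h | h
  · exact kl_core p q hp1 hp2 hq1 hq2 h
  · have := kl_core (1-p) (1-q) (by linarith) (by linarith) (by linarith) (by linarith)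
      (by linarith)
    have e1 : 1 - (1-p) = p := by ring
    have e2 : 1 - (1-q) = q := by ring
    rw [e1, e2] at this
    nlinarith [this]

lemma trig_int (a b : ℝ) :
    ∫ t in (0:ℝ)..(2*π), (a * cos t + b * sin t)^2 = π * (a^2 + b^2) := by
  have hftc := intervalIntegral.integral_eq_sub_of_hasDerivAt
    (f := fun t => a^2*(t/2 + sin t * cos t/2) + a*b*(sin t)^2 + b^2*(t/2 - sin t * cos t/2))
    (f' := fun t => (a * cos t + b * sin t)^2)
    (a := (0:ℝ)) (b := 2*π)
    (by
      intro t _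
      have h1 : HasDerivAt (fun t => sin t * cos t) (cos t * cos t + sin t * (-sin t)) t :=
        (hasDerivAt_sin t).mul (hasDerivAt_cos t)
      have h2 : HasDerivAt (fun t : ℝ => (sin t)^2) (2 * sin t * cos t) t := by
        have := (hasDerivAt_sin t).pow 2
        exact this.congr_deriv (by norm_num)
      have hid : HasDerivAt (fun t : ℝ => t) 1 t := hasDerivAt_id t
      have h3 := (((hid.div_const 2).add (h1.div_const 2)).const_mul (a^2)).add
        ((h2.const_mul (a*b)).add
          (((hid.div_const 2).sub (h1.div_const 2)).const_mul (b^2)))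
      convert h3 using 1
      · funext s; simp only [Pi.add_apply, Pi.sub_apply]; ring
      · have hpy := sin_sq_add_cos_sq t
        nlinarith [hpy])
    ((Continuous.intervalIntegrable (by fun_prop)) _ _)
  rw [hftc]
  simp [sin_two_pi, cos_two_pi]
  ring


/-- Lemma B.2 (KL bound for n i.i.d. samples): for unit vectors θ₁, θ₂ and the
distribution D_θ on S¹ × {0,1} where X is uniform on the circle and
Y | X ∼ Bernoulli(1/2 + ⟨θ, X⟩/4), the KL divergence between n i.i.d. samples —
which by tensorization and the chain rule equals
n · E_{X}[KL(Bern(p_{θ₁}(X)) ‖ Bern(p_{θ₂}(X)))] — is at most (n/12)‖θ₁ - θ₂‖₂².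
Here KL(Bern(p) ‖ Bern(q)) = p log(p/q) + (1-p) log((1-p)/(1-q)) and the
expectation over X is the uniform angle average over [0, 2π]. -/
theorem kl_bound_n_samples
    (n : ℕ) (θ₁ θ₂ : ℝ × ℝ)
    (hθ₁ : θ₁.1 ^ 2 + θ₁.2 ^ 2 = 1) (hθ₂ : θ₂.1 ^ 2 + θ₂.2 ^ 2 = 1)
    (p₁ p₂ : ℝ → ℝ)
    (hp₁ : ∀ t, p₁ t = 1 / 2 + (θ₁.1 * cos t + θ₁.2 * sin t) / 4)
    (hp₂ : ∀ t, p₂ t = 1 / 2 + (θ₂.1 * cos t + θ₂.2 * sin t) / 4) :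
    (n : ℝ) * ((1 / (2 * π)) * ∫ t in (0 : ℝ)..(2 * π),
        (p₁ t * Real.log (p₁ t / p₂ t) +
         (1 - p₁ t) * Real.log ((1 - p₁ t) / (1 - p₂ t)))) ≤
      ((n : ℝ) / 12) * ((θ₁.1 - θ₂.1) ^ 2 + (θ₁.2 - θ₂.2) ^ 2) := by
  have hp₁' : p₁ = fun t => 1 / 2 + (θ₁.1 * cos t + θ₁.2 * sin t) / 4 := funext hp₁
  have hp₂' : p₂ = fun t => 1 / 2 + (θ₂.1 * cos t + θ₂.2 * sin t) / 4 := funext hp₂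
  subst hp₁' hp₂'
  set S : ℝ := (θ₁.1 - θ₂.1) ^ 2 + (θ₁.2 - θ₂.2) ^ 2 with hS
  have hb₁ : ∀ t, 1/4 ≤ (1:ℝ) / 2 + (θ₁.1 * cos t + θ₁.2 * sin t) / 4 ∧
      (1:ℝ) / 2 + (θ₁.1 * cos t + θ₁.2 * sin t) / 4 ≤ 3/4 := by
    intro t
    constructor <;>
      nlinarith [sq_nonneg (θ₁.1 * sin t - θ₁.2 * cos t), sq_nonneg (θ₁.1 * sin t + θ₁.2 * cos t),
        sin_sq_add_cos_sq t]
  have hb₂ : ∀ t, 1/4 ≤ (1:ℝ) / 2 + (θ₂.1 * cos t + θ₂.2 * sin t) / 4 ∧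
      (1:ℝ) / 2 + (θ₂.1 * cos t + θ₂.2 * sin t) / 4 ≤ 3/4 := by
    intro t
    constructor <;>
      nlinarith [sq_nonneg (θ₂.1 * sin t - θ₂.2 * cos t), sq_nonneg (θ₂.1 * sin t + θ₂.2 * cos t),
        sin_sq_add_cos_sq t]
  set P : ℝ → ℝ := fun t => 1 / 2 + (θ₁.1 * cos t + θ₁.2 * sin t) / 4 with hP
  set Q : ℝ → ℝ := fun t => 1 / 2 + (θ₂.1 * cos t + θ₂.2 * sin t) / 4 with hQ
  have hPc : Continuous P := by fun_prop
  have hQc : Continuous Q := by fun_prop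
  have hgc : Continuous (fun t => P t * Real.log (P t / Q t) +
      (1 - P t) * Real.log ((1 - P t) / (1 - Q t))) := by
    refine (hPc.mul (Continuous.log (hPc.div hQc ?_) ?_)).add
      ((continuous_const.sub hPc).mul (Continuous.log
        ((continuous_const.sub hPc).div (continuous_const.sub hQc) ?_) ?_))
    · intro t; exact (lt_of_lt_of_le (by norm_num) (hb₂ t).1).ne'
    · intro t
      exact div_ne_zero (lt_of_lt_of_le (by norm_num) (hb₁ t).1).ne'
        (lt_of_lt_of_le (by norm_num) (hb₂ t).1).ne'
    · intro t
      have h := (hb₂ t).2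
      have : (0:ℝ) < 1 - Q t := by rw [hp₂ t]; linarith
      exact this.ne'
    · intro t
      have h1 := (hb₁ t).2; have h2 := (hb₂ t).2
      have hn1 : (0:ℝ) < 1 - P t := by rw [hp₁ t]; linarith
      have hn2 : (0:ℝ) < 1 - Q t := by rw [hp₂ t]; linarith
      exact div_ne_zero hn1.ne' hn2.ne'
  have hmono : (∫ t in (0:ℝ)..(2*π), (P t * Real.log (P t / Q t) +
      (1 - P t) * Real.log ((1 - P t) / (1 - Q t)))) ≤
      ∫ t in (0:ℝ)..(2*π), 8/3 * (P t - Q t)^2 := by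
    apply intervalIntegral.integral_mono_on (by positivity)
      (hgc.intervalIntegrable _ _)
      ((Continuous.intervalIntegrable (by fun_prop)) _ _)
    intro t _
    exact kl_bern (P t) (Q t) (hb₁ t).1 (hb₁ t).2 (hb₂ t).1 (hb₂ t).2
  have hval : (∫ t in (0:ℝ)..(2*π), 8/3 * (P t - Q t)^2) = π / 6 * S := by
    have hcong : (∫ t in (0:ℝ)..(2*π), 8/3 * (P t - Q t)^2) =
        ∫ t in (0:ℝ)..(2*π), (1/6 : ℝ) *
          ((θ₁.1 - θ₂.1) * cos t + (θ₁.2 - θ₂.2) * sin t)^2 := by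
      apply intervalIntegral.integral_congr
      intro t _
      simp only [hP, hQ]
      ring
    rw [hcong, intervalIntegral.integral_const_mul, trig_int]
    rw [hS]; ring
  have hI := hmono.trans (le_of_eq hval)
  have hπ : (0:ℝ) < π := pi_pos
  have hn : (0:ℝ) ≤ (n:ℝ) := Nat.cast_nonneg n
  calc (n : ℝ) * ((1 / (2 * π)) * ∫ t in (0:ℝ)..(2*π), (P t * Real.log (P t / Q t) +
        (1 - P t) * Real.log ((1 - P t) / (1 - Q t))))
      ≤ (n : ℝ) * ((1 / (2 * π)) * (π / 6 * S)) := by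
        apply mul_le_mul_of_nonneg_left _ hn
        apply mul_le_mul_of_nonneg_left hI (by positivity)
    _ = ((n : ℝ) / 12) * S := by
        field_simp
        ring
end
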